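/- Let Φ : [0,∞) → [0,∞) be continuous and monotonically increasing, α > 0, and ε ∈ (0,1). Define Φ_ε : ℝ^d_* → [0,∞) by Φ_ε(x) = Φ(ε^{-α}) |x|/ε if |x| < ε and Φ_ε(x) = Φ(|x|^{-α}) if |x| ≥ ε. Then Φ_ε is subadditive: Φ_ε(x+y) ≤ Φ_ε(x) + Φ_ε(y) for all x, y ∈ ℝ^d_*. -/
import Mathlib


open Real

def l1norm {d : ℕ} (x : Fin d → ℝ) : ℝ := ∑ i, x i

def memRdStar {d : ℕ} (x : Fin d → ℝ) : Prop := (∀ i, 0 ≤ x i) ∧ x ≠ 0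

/-- The regularisation Φ_ε of x ↦ Φ(|x|^{-α}). -/
noncomputable def PhiEps {d : ℕ} (Φ : ℝ → ℝ) (α ε : ℝ) (x : Fin d → ℝ) : ℝ :=
  if l1norm x < ε then Φ (ε ^ (-α)) * (l1norm x / ε) else Φ ((l1norm x) ^ (-α))

lemma l1norm_pos {d : ℕ} {x : Fin d → ℝ} (hx : memRdStar x) : 0 < l1norm x := by
  obtain ⟨h0, hne⟩ := hx
  obtain ⟨i, hi⟩ := Function.ne_iff.mp hne
  exact Finset.sum_pos' (fun j _ => h0 j)
    ⟨i, Finset.mem_univ i, lt_of_le_of_ne (h0 i) (Ne.symm hi)⟩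

/-- For continuous monotonically increasing Φ : [0,∞) → [0,∞), α > 0, ε ∈ (0,1),
the regularisation Φ_ε is subadditive on ℝ^d_*. -/
theorem PhiEps_subadditive {d : ℕ} (Φ : ℝ → ℝ) (α ε : ℝ)
    (hΦcont : ContinuousOn Φ (Set.Ici 0))
    (hΦmono : MonotoneOn Φ (Set.Ici 0))
    (hΦnonneg : ∀ r : ℝ, 0 ≤ r → 0 ≤ Φ r)
    (hα : 0 < α) (hε : ε ∈ Set.Ioo (0:ℝ) 1) :
    ∀ x y : Fin d → ℝ, memRdStar x → memRdStar y →
      PhiEps Φ α ε (x + y) ≤ PhiEps Φ α ε x + PhiEps Φ α ε y := by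
  obtain ⟨hε0, hε1⟩ := hε
  intro x y hx hy
  have ha := l1norm_pos hx
  have hb := l1norm_pos hy
  have hsum : l1norm (x + y) = l1norm x + l1norm y := by
    simp [l1norm, Finset.sum_add_distrib]
  set a := l1norm x with hA
  set b := l1norm y with hB
  have hC : 0 ≤ Φ (ε ^ (-α)) := hΦnonneg _ (Real.rpow_nonneg hε0.le _)
  have habpos : 0 < a + b := by linarith
  unfold PhiEps
  rw [hsum]
  by_cases hab : a + b < ε
  · rw [if_pos hab, if_pos (by linarith), if_pos (by linarith)]
    apply le_of_eq
    ring
  · rw [if_neg hab]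
    push_neg at hab
    have hmem : (a + b) ^ (-α) ∈ Set.Ici (0:ℝ) := Real.rpow_nonneg habpos.le _
    by_cases h1 : a < ε
    · by_cases h2 : b < ε
      · rw [if_pos h1, if_pos h2]
        have hle : Φ ((a + b) ^ (-α)) ≤ Φ (ε ^ (-α)) :=
          hΦmono hmem (Real.rpow_nonneg hε0.le _)
            (Real.rpow_le_rpow_of_nonpos hε0 hab (by linarith))
        have : Φ (ε ^ (-α)) ≤ Φ (ε ^ (-α)) * (a / ε) + Φ (ε ^ (-α)) * (b / ε) := by
          have : Φ (ε ^ (-α)) * 1 ≤ Φ (ε ^ (-α)) * ((a + b) / ε) := by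
            apply mul_le_mul_of_nonneg_left _ hC
            rw [le_div_iff₀ hε0]; linarith
          calc Φ (ε ^ (-α)) = Φ (ε ^ (-α)) * 1 := by ring
            _ ≤ Φ (ε ^ (-α)) * ((a + b) / ε) := this
            _ = Φ (ε ^ (-α)) * (a / ε) + Φ (ε ^ (-α)) * (b / ε) := by ring
        linarith
      · rw [if_pos h1, if_neg h2]
        push_neg at h2
        have hle : Φ ((a + b) ^ (-α)) ≤ Φ (b ^ (-α)) :=
          hΦmono hmem (Real.rpow_nonneg hb.le _)
            (Real.rpow_le_rpow_of_nonpos hb (by linarith) (by linarith))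
        have : 0 ≤ Φ (ε ^ (-α)) * (a / ε) :=
          mul_nonneg hC (div_nonneg ha.le hε0.le)
        linarith
    · rw [if_neg h1]
      push_neg at h1
      have hle : Φ ((a + b) ^ (-α)) ≤ Φ (a ^ (-α)) :=
        hΦmono hmem (Real.rpow_nonneg ha.le _)
          (Real.rpow_le_rpow_of_nonpos ha (by linarith) (by linarith))
      by_cases h2 : b < ε
      · rw [if_pos h2]
        have : 0 ≤ Φ (ε ^ (-α)) * (b / ε) :=
          mul_nonneg hC (div_nonneg hb.le hε0.le)
        linarith
      · rw [if_neg h2]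
        have : 0 ≤ Φ (b ^ (-α)) := hΦnonneg _ (Real.rpow_nonneg hb.le _)
        linarith
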